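/- arXiv:2511.20984 — 3 statements merged into one kernel-verified Lean document; each statement's English description precedes it below -/
import Mathlib

section
/- For any impartial game with activeness G^g, the set 𝒢^𝟙(G^g) (with respect to the all-ones sequence) is the singleton {mex ∪_{G'^{g'}∈G} 𝒢^𝟙(G'^{g'})}; equivalently, 𝒢^𝟙(G^g) = {𝒢(G^g)} where 𝒢 is the ordinary Grundy value computed ignoring activeness. -/
inductive AGame : Type where
  | mk : List AGame → Bool → AGame

namespace AGame

noncomputable instance : DecidableEq AGame := Classical.decEq _

def opts : AGame → List AGame | mk gs _ => gs
def act : AGame → Bool | mk _ g => g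

theorem sizeOf_lt_of_mem {G G' : AGame} (h : G' ∈ G.opts) : sizeOf G' < sizeOf G := by
  cases G with
  | mk gs g =>
    simp only [opts] at h
    have := List.sizeOf_lt_of_mem h
    simp [AGame.mk.sizeOf_spec]
    omega

/-- Disjunctive sum of games with activeness. -/
def add (G H : AGame) : AGame :=
  mk (G.opts.attach.map (fun x => add x.1 H) ++
      H.opts.attach.map (fun y => add G y.1)) (G.act || H.act)
termination_by sizeOf G + sizeOf H
decreasing_by
  · have := sizeOf_lt_of_mem x.2; omega
  · have := sizeOf_lt_of_mem y.2; omega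

/-- `PPos G` means the outcome of `G` is 𝒫 (second player wins). -/
def PPos (G : AGame) : Prop :=
  G.act = false ∨ ∀ G' ∈ G.opts.attach, ¬ PPos G'.1
termination_by sizeOf G
decreasing_by
  have := sizeOf_lt_of_mem G'.2; omega

/-- Hereditary set-equality (the paper's ≅). -/
def Identical (G H : AGame) : Prop :=
  G.act = H.act ∧ (∀ G' ∈ G.opts.attach, ∃ H' ∈ H.opts.attach, Identical G'.1 H'.1)
              ∧ (∀ H' ∈ H.opts.attach, ∃ G' ∈ G.opts.attach, Identical G'.1 H'.1)
termination_by sizeOf G + sizeOf H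
decreasing_by
  · have := sizeOf_lt_of_mem G'.2; have := sizeOf_lt_of_mem H'.2; omega
  · have := sizeOf_lt_of_mem G'.2; have := sizeOf_lt_of_mem H'.2; omega

/-- Equivalence of games with activeness: same outcome in every sum. -/
def Equiv (G H : AGame) : Prop := ∀ X : AGame, (PPos (add G X) ↔ PPos (add H X))

end AGame

namespace AGame

/-- Nimbers with activeness: `star γ n ≅ {star γ j : j < n}^{γ n}`. -/
def star (γ : ℕ → Bool) : ℕ → AGame
  | n => mk ((List.range n).attach.map (fun j => star γ j.1)) (γ n)
termination_by n => n
decreasing_by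
  have := j.2; simp [List.mem_range] at this; omega

/-- The generalized Grundy set `𝒢^γ(G)`. -/
def GSet (γ : ℕ → Bool) (G : AGame) : Set ℕ := {n | PPos (add G (star γ n))}

/-- Minimum excludant of a set of naturals. -/
noncomputable def mex (S : Set ℕ) : ℕ := sInf {n | n ∉ S}

/-- Ordinary Grundy value, computed ignoring activeness. -/
noncomputable def grundy (G : AGame) : ℕ :=
  mex {m | ∃ G' ∈ G.opts.attach, grundy G'.1 = m}
termination_by sizeOf G
decreasing_by
  have := sizeOf_lt_of_mem G'.2; omega

/-- The three types of games with activeness. -/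
inductive AType : Type where
  | inactive : AType            -- type 0
  | activeSomeInactive : AType  -- type 1_{∃0}
  | activeAllActive : AType     -- type 1_{∀1}

open Classical in
/-- `type(G^g)`. -/
noncomputable def typ (G : AGame) : AType :=
  if G.act = false then .inactive
  else if ∃ G' ∈ G.opts, G'.act = false then .activeSomeInactive
  else .activeAllActive

/-- Formal birthday `b(G)`. -/
def bday (G : AGame) : ℕ :=
  (G.opts.attach.map (fun G' => bday G'.1 + 1)).foldr max 0
termination_by sizeOf G
decreasing_by
  have := sizeOf_lt_of_mem G'.2; omega

/-- An option `G'` of `G` is reversible if it has an option equivalent to `G`. -/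
def Reversible (G G' : AGame) : Prop := ∃ G'' ∈ G'.opts, Equiv G'' G

/-- A canonical game: all options canonical and no option reversible. -/
def Canonical (G : AGame) : Prop :=
  (∀ G' ∈ G.opts.attach, Canonical G'.1) ∧ (∀ G' ∈ G.opts, ¬ Reversible G G')
termination_by sizeOf G
decreasing_by
  have := sizeOf_lt_of_mem G'.2; omega

/-- A transitive game: all options transitive and options of options are options. -/
def TransGame (G : AGame) : Prop :=
  (∀ G' ∈ G.opts.attach, TransGame G'.1) ∧ (∀ G' ∈ G.opts, ∀ G'' ∈ G'.opts, G'' ∈ G.opts)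
termination_by sizeOf G
decreasing_by
  have := sizeOf_lt_of_mem G'.2; omega

/-- `G` is covered by `H` if every option of `G` is equivalent to some option of `H`. -/
def Covered (G H : AGame) : Prop := ∀ G' ∈ G.opts, ∃ H' ∈ H.opts, Equiv G' H'

/-- The relation `G ⋈ H`. -/
def Bowtie (G H : AGame) : Prop :=
  (∀ G' ∈ G.opts, ¬ Equiv G' H) ∧ (∀ H' ∈ H.opts, ¬ Equiv G H')

/-- The linear chain `∅^{g₀ g₁ … gₙ}`. -/
def chain (g : ℕ → Bool) : ℕ → AGame
  | 0 => mk [] (g 0)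
  | n + 1 => mk [chain g n] (g (n + 1))

end AGame

namespace AGame

lemma grundy_def (G : AGame) :
    grundy G = mex {m | ∃ G' ∈ G.opts, grundy G' = m} := by
  rw [grundy]
  congr 1
  ext m
  simp

lemma gSet_finite (G : AGame) :
    ({m | ∃ G' ∈ G.opts, grundy G' = m} : Set ℕ).Finite := by
  have : {m | ∃ G' ∈ G.opts, grundy G' = m} = grundy '' {x | x ∈ G.opts} := by
    ext m; simp [Set.mem_image, eq_comm]
  rw [this]
  exact (G.opts.finite_toSet).image _

lemma mex_compl_nonempty {S : Set ℕ} (hS : S.Finite) : {n | n ∉ S}.Nonempty :=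
  (hS.infinite_compl).nonempty

lemma mex_not_mem {S : Set ℕ} (hS : S.Finite) : mex S ∉ S :=
  Nat.sInf_mem (mex_compl_nonempty hS)

lemma mex_le {S : Set ℕ} {n : ℕ} (hn : n ∉ S) : mex S ≤ n :=
  Nat.sInf_le hn

lemma key (G : AGame) (n : ℕ) :
    PPos (add G (star (fun _ => true) n)) ↔ grundy G = n := by
  have hopt : ∀ X ∈ (add G (star (fun _ => true) n)).opts,
      (∃ G' ∈ G.opts, X = add G' (star (fun _ => true) n)) ∨
      (∃ j < n, X = add G (star (fun _ => true) j)) := by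
    intro X hX
    rw [add] at hX
    simp only [opts, List.mem_append, List.mem_map, List.mem_attach, true_and,
      Subtype.exists] at hX
    rcases hX with ⟨a, ha, rfl⟩ | ⟨a, ha, rfl⟩
    · exact Or.inl ⟨a, ha, rfl⟩
    · right
      rw [star] at ha
      simp only [opts, List.mem_map, List.mem_attach, true_and, Subtype.exists,
        List.mem_range] at ha
      obtain ⟨j, hj, rfl⟩ := ha
      exact ⟨j, hj, rfl⟩
  have hopt' : ∀ G' ∈ G.opts, add G' (star (fun _ => true) n) ∈
      (add G (star (fun _ => true) n)).opts := by
    intro G' hG'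
    rw [add]
    simp only [opts, List.mem_append, List.mem_map, List.mem_attach, true_and,
      Subtype.exists]
    exact Or.inl ⟨G', hG', rfl⟩
  have hopt'' : ∀ j < n, add G (star (fun _ => true) j) ∈
      (add G (star (fun _ => true) n)).opts := by
    intro j hj
    rw [add]
    simp only [opts, List.mem_append, List.mem_map, List.mem_attach, true_and,
      Subtype.exists]
    right
    refine ⟨star (fun _ => true) j, ?_, rfl⟩
    rw [star]
    simp only [opts, List.mem_map, List.mem_attach, true_and, Subtype.exists,
      List.mem_range]
    exact ⟨j, hj, rfl⟩
  have hact : (add G (star (fun _ => true) n)).act = true := by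
    rw [add, star]; simp [act]
  have hP : PPos (add G (star (fun _ => true) n)) ↔
      ∀ X ∈ (add G (star (fun _ => true) n)).opts, ¬ PPos X := by
    rw [PPos]
    simp [hact]
  rw [hP]
  have hiff : (∀ X ∈ (add G (star (fun _ => true) n)).opts, ¬ PPos X) ↔
      (∀ G' ∈ G.opts, grundy G' ≠ n) ∧ (∀ j < n, grundy G ≠ j) := by
    constructor
    · intro h
      constructor
      · intro G' hG' heq
        have := h _ (hopt' G' hG')
        rw [key G' n] at this
        exact this heq
      · intro j hj heq
        have := h _ (hopt'' j hj)
        rw [key G j] at this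
        exact this heq
    · rintro ⟨h1, h2⟩ X hX
      rcases hopt X hX with ⟨G', hG', rfl⟩ | ⟨j, hj, rfl⟩
      · rw [key G' n]; exact h1 G' hG'
      · rw [key G j]; exact h2 j hj
  rw [hiff]
  constructor
  · rintro ⟨h1, h2⟩
    have hge : n ≤ grundy G := by
      by_contra hlt
      exact h2 _ (Nat.lt_of_not_le hlt) rfl
    have hle : grundy G ≤ n := by
      rw [grundy_def]
      exact mex_le (by simpa using h1)
    omega
  · rintro rfl
    refine ⟨?_, fun j hj => Nat.ne_of_gt hj⟩
    intro G' hG' heq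
    have := mex_not_mem (gSet_finite G)
    rw [← grundy_def] at this
    exact this ⟨G', hG', heq⟩
termination_by sizeOf G + n
decreasing_by
  · have := sizeOf_lt_of_mem hG'; omega
  · omega
  · have := sizeOf_lt_of_mem hG'; omega
  · omega

end AGame

/-- For the all-ones sequence, `𝒢^𝟙(G)` is the singleton of the mex of the union of
the options' sets, equivalently the singleton of the ordinary Grundy value. -/
theorem AGame.gset_ones (G : AGame) :
    AGame.GSet (fun _ => true) G =
      {AGame.mex {m : ℕ | ∃ G' ∈ G.opts, m ∈ AGame.GSet (fun _ => true) G'}} ∧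
    AGame.GSet (fun _ => true) G = {AGame.grundy G} := by
  have h2 : AGame.GSet (fun _ => true) G = {AGame.grundy G} := by
    ext n
    simp only [AGame.GSet, Set.mem_setOf_eq, Set.mem_singleton_iff, AGame.key, eq_comm]
  refine ⟨?_, h2⟩
  rw [h2]
  have : {m : ℕ | ∃ G' ∈ G.opts, m ∈ AGame.GSet (fun _ => true) G'} =
      {m | ∃ G' ∈ G.opts, AGame.grundy G' = m} := by
    ext m
    simp only [Set.mem_setOf_eq, AGame.GSet, AGame.key, eq_comm]
  rw [this, ← AGame.grundy_def]
end

section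
/- If two impartial games with activeness G^g and H^h are equivalent (o(G^g+X^x)=o(H^h+X^x) for all X^x), then for every sequence γ ∈ {0,1}^∞, 𝒢^γ(G^g) = 𝒢^γ(H^h). -/
/-- Equivalent games have the same generalized Grundy set for every sequence γ. -/
theorem AGame.gset_eq_of_equiv (G H : AGame) (h : AGame.Equiv G H) (γ : ℕ → Bool) :
    AGame.GSet γ G = AGame.GSet γ H := Set.ext fun n => h (star γ n)
end

section
/- For any impartial game with activeness G^g and any option G'^{g'} ∈ G^g, the games G^g and G'^{g'} are not equivalent; in fact the game G^g + ∅^1 distinguishes them. -/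
namespace AGame

theorem opts_add (G H : AGame) : (add G H).opts =
    G.opts.attach.map (fun x => add x.1 H) ++ H.opts.attach.map (fun y => add G y.1) := by
  conv_lhs => rw [add]
  rfl

theorem act_add (G H : AGame) : (add G H).act = (G.act || H.act) := by
  conv_lhs => rw [add]
  rfl

theorem mem_opts_add {X G H : AGame} : X ∈ (add G H).opts ↔
    (∃ G' ∈ G.opts, X = add G' H) ∨ (∃ H' ∈ H.opts, X = add G H') := by
  rw [opts_add]
  simp only [List.mem_append, List.mem_map, List.mem_attach, true_and, Subtype.exists]
  constructor
  · rintro (⟨a, ha, rfl⟩ | ⟨a, ha, rfl⟩)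
    · exact Or.inl ⟨a, ha, rfl⟩
    · exact Or.inr ⟨a, ha, rfl⟩
  · rintro (⟨a, ha, rfl⟩ | ⟨a, ha, rfl⟩)
    · exact Or.inl ⟨a, ha, rfl⟩
    · exact Or.inr ⟨a, ha, rfl⟩

theorem PPos_iff (G : AGame) : PPos G ↔ (G.act = false ∨ ∀ G' ∈ G.opts, ¬ PPos G') := by
  rw [PPos]
  simp only [List.mem_attach, true_implies, Subtype.forall]

theorem key_s9 : ∀ n (G : AGame), sizeOf G ≤ n →
    PPos (add G (add G (mk [] true))) := by
  intro n
  induction n with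
  | zero => intro G hG; cases G with | mk gs g => simp [AGame.mk.sizeOf_spec] at hG
  | succ n ih =>
    intro G hG
    rw [PPos_iff]
    right
    intro X hX
    have hEopts : (mk [] true).opts = [] := rfl
    rw [mem_opts_add] at hX
    rcases hX with ⟨G'', hG'', rfl⟩ | ⟨H', hH', rfl⟩
    · -- X = G'' + (G + E)
      intro hP
      rw [PPos_iff] at hP
      rcases hP with hact | hall
      · rw [act_add, act_add] at hact; simp [act] at hact
      · refine hall (add G'' (add G'' (mk [] true))) ?_ ?_
        · rw [mem_opts_add]
          exact Or.inr ⟨add G'' (mk [] true), by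
            rw [mem_opts_add]; exact Or.inl ⟨G'', hG'', rfl⟩, rfl⟩
        · have := sizeOf_lt_of_mem hG''
          exact ih G'' (by omega)
    · -- X = G + H', H' option of G + E
      rw [mem_opts_add] at hH'
      rcases hH' with ⟨G'', hG'', rfl⟩ | ⟨E', hE', rfl⟩
      · intro hP
        rw [PPos_iff] at hP
        rcases hP with hact | hall
        · rw [act_add, act_add] at hact; simp [act] at hact
        · refine hall (add G'' (add G'' (mk [] true))) ?_ ?_
          · rw [mem_opts_add]
            exact Or.inl ⟨G'', hG'', rfl⟩
          · have := sizeOf_lt_of_mem hG''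
            exact ih G'' (by omega)
      · rw [hEopts] at hE'; simp at hE'

theorem keyN (G G' : AGame) (h : G' ∈ G.opts) :
    ¬ PPos (add G' (add G (mk [] true))) := by
  intro hP
  rw [PPos_iff] at hP
  rcases hP with hact | hall
  · rw [act_add, act_add] at hact; simp [act] at hact
  · refine hall (add G' (add G' (mk [] true))) ?_ ?_
    · rw [mem_opts_add]
      exact Or.inr ⟨add G' (mk [] true), by
        rw [mem_opts_add]; exact Or.inl ⟨G', h, rfl⟩, rfl⟩
    · exact key_s9 _ G' le_rfl

end AGame

/-- A game is never equivalent to any of its options; in fact `G + ∅^1` distinguishes them. -/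
theorem AGame.not_equiv_option (G G' : AGame) (h : G' ∈ G.opts) :
    ¬ AGame.Equiv G G' ∧
    ¬ (AGame.PPos (AGame.add G (AGame.add G (AGame.mk [] true))) ↔
       AGame.PPos (AGame.add G' (AGame.add G (AGame.mk [] true)))) := by
  have h2 : ¬ (AGame.PPos (AGame.add G (AGame.add G (AGame.mk [] true))) ↔
       AGame.PPos (AGame.add G' (AGame.add G (AGame.mk [] true)))) := by
    intro hiff
    exact AGame.keyN G G' h (hiff.mp (AGame.key_s9 _ G le_rfl))
  exact ⟨fun he => h2 (he (AGame.add G (AGame.mk [] true))), h2⟩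
end
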